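/- Fix ε ∈ (0,1) and real numbers 0 ≤ b < b′. Define time-dependent conductances on ℤ by: μ^{(t)}(i,i−1)=1−ε, μ^{(t)}(i,i)=b, μ^{(t)}(i,i+1)=1+ε whenever t+i is even, and μ^{(t)}(i,i−1)=1+ε, μ^{(t)}(i,i)=b′, μ^{(t)}(i,i+1)=1−ε whenever t+i is odd. Set γ = b/(b+2) and γ′ = b′/(b′+2), so 0 ≤ γ < γ′ < 1. Then the discrete-time random walk (X_t) among these conductances started at X_0 = 0 satisfies, almost surely, X_t/t → ε(γ′−γ)/(γ′+γ) > 0. -/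

import Mathlib

open MeasureTheory Filter

/-- Total conductance at a vertex: `μ^{(t)}(x) = Σ_y μ^{(t)}(x,y)`. -/
noncomputable def wdeg (μ : ℕ → ℤ → ℤ → ℝ) (t : ℕ) (x : ℤ) : ℝ := ∑' y : ℤ, μ t x y

/-- One-step transition probability `P^{(t)}(x,y) = μ^{(t)}(x,y)/μ^{(t)}(x)`. -/
noncomputable def stepP (μ : ℕ → ℤ → ℤ → ℝ) (t : ℕ) (x y : ℤ) : ℝ :=
  μ t x y / wdeg μ t x

/-- `(X_t)_{t∈ℕ}` under `P` is the discrete-time random walk among the time-dependent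
conductances `μ`, started at `x₀`: its finite-dimensional distributions are the ones
produced by the Ionescu–Tulcea construction. -/
def IsWalkLaw (μ : ℕ → ℤ → ℤ → ℝ) {Ω : Type*} [MeasurableSpace Ω] (P : Measure Ω)
    (X : ℕ → Ω → ℤ) (x₀ : ℤ) : Prop :=
  (∀ t, Measurable (X t)) ∧
  ∀ (n : ℕ) (path : ℕ → ℤ),
    P {ω | ∀ t ≤ n, X t ω = path t} =
      (if path 0 = x₀ then 1 else 0) *
        ENNReal.ofReal (∏ t ∈ Finset.range n, stepP μ t (path t) (path (t + 1)))

namespace RW1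

lemma one_lt_abs {i j : ℤ} (h : ¬(j = i - 1 ∨ j = i ∨ j = i + 1)) : 1 < |i - j| := by
  push_neg at h
  rw [lt_abs]
  omega

/-- Extension of a finite path by a final value. -/
def pathExt (n : ℕ) (v : Fin n → ℤ) (x : ℤ) : ℕ → ℤ := fun t => if h : t < n then v ⟨t, h⟩ else x

/-- Marginal weights built from transition probabilities. -/
noncomputable def Uf (p : ℕ → ℤ → ℤ → ℝ) : ℕ → ℤ → ENNReal
  | 0, x => if x = 0 then 1 else 0
  | (n+1), y => ∑' x : ℤ, Uf p n x * ENNReal.ofReal (p n x y)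

/-- Weight of a cylinder. -/
noncomputable def Wf (p : ℕ → ℤ → ℤ → ℝ) (n : ℕ) (v : Fin n → ℤ) (x : ℤ) : ENNReal :=
  (if pathExt n v x 0 = 0 then 1 else 0) *
    ENNReal.ofReal (∏ t ∈ Finset.range n, p t (pathExt n v x t) (pathExt n v x (t + 1)))

lemma pathExt_last (n : ℕ) (v : Fin n → ℤ) (x : ℤ) : pathExt n v x n = x := by
  simp [pathExt]

lemma pathExt_snoc {n : ℕ} (v : Fin n → ℤ) (z x : ℤ) {t : ℕ} (ht : t ≤ n) :
    pathExt (n+1) (Fin.snoc v z) x t = pathExt n v z t := by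
  rcases lt_or_eq_of_le ht with h | rfl
  · have h1 : t < n + 1 := Nat.lt_succ_of_lt h
    simp only [pathExt, dif_pos h, dif_pos h1]
    have : (⟨t, h1⟩ : Fin (n+1)) = Fin.castSucc ⟨t, h⟩ := rfl
    rw [this, Fin.snoc_castSucc]
  · have h1 : t < t + 1 := Nat.lt_succ_self t
    simp only [pathExt, dif_pos h1, dif_neg (lt_irrefl t)]
    have : (⟨t, h1⟩ : Fin (t+1)) = Fin.last t := rfl
    rw [this, Fin.snoc_last]

def snocEquiv (n : ℕ) : ((Fin n → ℤ) × ℤ) ≃ (Fin (n+1) → ℤ) where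
  toFun vz := Fin.snoc vz.1 vz.2
  invFun w := (Fin.init w, w (Fin.last n))
  left_inv := by rintro ⟨v, z⟩; simp
  right_inv := by intro w; simp

lemma Wf_snoc (p : ℕ → ℤ → ℤ → ℝ) (hnn : ∀ t x y, 0 ≤ p t x y) (n : ℕ)
    (v : Fin n → ℤ) (z x : ℤ) :
    Wf p (n+1) (Fin.snoc v z) x = Wf p n v z * ENNReal.ofReal (p n z x) := by
  unfold Wf
  have h0 : pathExt (n+1) (Fin.snoc v z) x 0 = pathExt n v z 0 :=
    pathExt_snoc v z x (Nat.zero_le n)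
  have hprod : ∏ t ∈ Finset.range (n+1),
      p t (pathExt (n+1) (Fin.snoc v z) x t) (pathExt (n+1) (Fin.snoc v z) x (t+1))
      = (∏ t ∈ Finset.range n, p t (pathExt n v z t) (pathExt n v z (t+1))) * p n z x := by
    rw [Finset.prod_range_succ]
    congr 1
    · apply Finset.prod_congr rfl
      intro t ht
      rw [Finset.mem_range] at ht
      rw [pathExt_snoc v z x (le_of_lt ht), pathExt_snoc v z x ht]
    · rw [pathExt_snoc v z x le_rfl, pathExt_last, pathExt_last]
  rw [h0, hprod, ENNReal.ofReal_mul (Finset.prod_nonneg fun t _ => hnn _ _ _)]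
  ring

lemma Uf_eq_tsum (p : ℕ → ℤ → ℤ → ℝ) (hnn : ∀ t x y, 0 ≤ p t x y) (n : ℕ) (x : ℤ) :
    Uf p n x = ∑' v : Fin n → ℤ, Wf p n v x := by
  induction n generalizing x with
  | zero =>
    rw [tsum_eq_single (default : Fin 0 → ℤ) (fun v hv => absurd (Subsingleton.elim v default) hv)]
    simp [Uf, Wf, pathExt]
  | succ n ih =>
    rw [← (snocEquiv n).tsum_eq (fun v => Wf p (n+1) v x)]
    have : ∀ vz : (Fin n → ℤ) × ℤ, Wf p (n+1) (snocEquiv n vz) x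
        = Wf p n vz.1 vz.2 * ENNReal.ofReal (p n vz.2 x) := by
      rintro ⟨v, z⟩; exact Wf_snoc p hnn n v z x
    rw [tsum_congr this, ENNReal.tsum_prod']
    show Uf p (n+1) x = _
    rw [show Uf p (n+1) x = ∑' z : ℤ, Uf p n z * ENNReal.ofReal (p n z x) from rfl]
    rw [ENNReal.tsum_comm]
    apply tsum_congr
    intro z
    rw [ih z]
    exact ENNReal.tsum_mul_right.symm

lemma measure_eq_Uf {μ : ℕ → ℤ → ℤ → ℝ} {Ω : Type*} [MeasurableSpace Ω] {P : Measure Ω}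
    {X : ℕ → Ω → ℤ} (hX : IsWalkLaw μ P X 0)
    (hnn : ∀ t x y, 0 ≤ stepP μ t x y) (n : ℕ) (x : ℤ) :
    P {ω | X n ω = x} = Uf (stepP μ) n x := by
  rw [Uf_eq_tsum _ hnn]
  have hdecomp : {ω | X n ω = x}
      = ⋃ v : Fin n → ℤ, {ω | ∀ t ≤ n, X t ω = pathExt n v x t} := by
    ext ω
    simp only [Set.mem_iUnion, Set.mem_setOf_eq]
    constructor
    · intro h
      refine ⟨fun i => X i ω, fun t ht => ?_⟩
      unfold pathExt
      split
      · rfl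
      · rename_i h'
        have : t = n := le_antisymm ht (not_lt.1 h')
        rw [this, h]
    · rintro ⟨v, hv⟩
      have := hv n le_rfl
      unfold pathExt at this
      rwa [dif_neg (lt_irrefl n)] at this
  have hmeas : ∀ v : Fin n → ℤ,
      MeasurableSet {ω | ∀ t ≤ n, X t ω = pathExt n v x t} := by
    intro v
    have : {ω | ∀ t ≤ n, X t ω = pathExt n v x t}
        = ⋂ (t : ℕ), ⋂ (_ : t ≤ n), (X t) ⁻¹' {pathExt n v x t} := by
      ext ω; simp
    rw [this]
    exact MeasurableSet.iInter fun t => MeasurableSet.iInter fun _ =>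
      (hX.1 t) (measurableSet_singleton _)
  have hdisj : Pairwise (Function.onFun Disjoint
      fun v : Fin n → ℤ => {ω | ∀ t ≤ n, X t ω = pathExt n v x t}) := by
    intro v w hvw
    rw [Function.onFun, Set.disjoint_left]
    intro ω hv hw
    apply hvw
    funext i
    have h1 := hv i.1 (le_of_lt i.2)
    have h2 := hw i.1 (le_of_lt i.2)
    simp only [pathExt, dif_pos i.2] at h1 h2
    have : v ⟨i.1, i.2⟩ = w ⟨i.1, i.2⟩ := h1.symm.trans h2
    simpa using this
  rw [hdecomp, measure_iUnion hdisj hmeas]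
  exact tsum_congr fun v => hX.2 n (pathExt n v x)

lemma Uf_bdd {μ : ℕ → ℤ → ℤ → ℝ} {Ω : Type*} [MeasurableSpace Ω] {P : Measure Ω}
    [IsProbabilityMeasure P]
    {X : ℕ → Ω → ℤ} (hX : IsWalkLaw μ P X 0)
    (hnn : ∀ t x y, 0 ≤ stepP μ t x y) (n : ℕ) (x : ℤ) :
    Uf (stepP μ) n x ≠ ⊤ := by
  rw [← measure_eq_Uf hX hnn]
  exact (measure_ne_top P _)

lemma Uf_zero (p : ℕ → ℤ → ℤ → ℝ) (hz : ∀ t x y, 1 < |x - y| → p t x y = 0) :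
    ∀ (n : ℕ) (x : ℤ), (n : ℤ) < |x| → Uf p n x = 0 := by
  intro n
  induction n with
  | zero =>
    intro x hx
    have : x ≠ 0 := by rw [lt_abs] at hx; omega
    simp [Uf, this]
  | succ n ih =>
    intro x hx
    show (∑' z : ℤ, Uf p n z * ENNReal.ofReal (p n z x)) = 0
    rw [ENNReal.tsum_eq_zero]
    intro z
    by_cases h : 1 < |z - x|
    · rw [hz n z x h, ENNReal.ofReal_zero, mul_zero]
    · have hzx : -1 ≤ z - x ∧ z - x ≤ 1 := abs_le.1 (not_lt.1 h)
      have : (n : ℤ) < |z| := by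
        rw [lt_abs] at hx ⊢
        push_cast at hx ⊢
        omega
      rw [ih z this, zero_mul]

lemma Uf_succ (p : ℕ → ℤ → ℤ → ℝ) (hz : ∀ t x y, 1 < |x - y| → p t x y = 0)
    (n : ℕ) (y : ℤ) :
    Uf p (n+1) y = ∑ x ∈ Finset.Icc (-(n:ℤ)) n, Uf p n x * ENNReal.ofReal (p n x y) := by
  show (∑' x : ℤ, Uf p n x * ENNReal.ofReal (p n x y)) = _
  apply tsum_eq_sum
  intro x hx
  rw [Finset.mem_Icc] at hx
  have : (n : ℤ) < |x| := by rw [lt_abs]; omega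
  rw [Uf_zero p hz n x this, zero_mul]

/-- Real-valued marginal. -/
noncomputable def rf (p : ℕ → ℤ → ℤ → ℝ) (n : ℕ) (x : ℤ) : ℝ := (Uf p n x).toReal

lemma rf_nonneg (p : ℕ → ℤ → ℤ → ℝ) (n : ℕ) (x : ℤ) : 0 ≤ rf p n x := ENNReal.toReal_nonneg

lemma rf_zero (p : ℕ → ℤ → ℤ → ℝ) (hz : ∀ t x y, 1 < |x - y| → p t x y = 0)
    (n : ℕ) (x : ℤ) (h : (n : ℤ) < |x|) : rf p n x = 0 := by
  rw [rf, Uf_zero p hz n x h, ENNReal.toReal_zero]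

lemma rf_zero_zero (p : ℕ → ℤ → ℤ → ℝ) : rf p 0 0 = 1 := by
  simp [rf, Uf]

lemma rf_succ (p : ℕ → ℤ → ℤ → ℝ) (hz : ∀ t x y, 1 < |x - y| → p t x y = 0)
    (hnn : ∀ t x y, 0 ≤ p t x y) (hfin : ∀ n x, Uf p n x ≠ ⊤) (n : ℕ) (y : ℤ) :
    rf p (n+1) y = ∑ x ∈ Finset.Icc (-(n:ℤ)) n, rf p n x * p n x y := by
  rw [rf, Uf_succ p hz, ENNReal.toReal_sum]
  · apply Finset.sum_congr rfl
    intro x _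
    rw [ENNReal.toReal_mul, ENNReal.toReal_ofReal (hnn n x y), rf]
  · intro x _
    exact ENNReal.mul_ne_top (hfin n x) ENNReal.ofReal_ne_top

/-! ### Facts about the specific conductances -/

lemma wdeg_eq {ε b b' : ℝ} {μ : ℕ → ℤ → ℤ → ℝ}
    (hsupp : ∀ (t : ℕ) (i j : ℤ), 1 < |i - j| → μ t i j = 0)
    (heven : ∀ (t : ℕ) (i : ℤ), Even ((t : ℤ) + i) →
      μ t i (i - 1) = 1 - ε ∧ μ t i i = b ∧ μ t i (i + 1) = 1 + ε)
    (hodd : ∀ (t : ℕ) (i : ℤ), ¬ Even ((t : ℤ) + i) →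
      μ t i (i - 1) = 1 + ε ∧ μ t i i = b' ∧ μ t i (i + 1) = 1 - ε)
    (t : ℕ) (i : ℤ) :
    wdeg μ t i = (if Even ((t : ℤ) + i) then b else b') + 2 := by
  unfold wdeg
  have hmem1 : (i : ℤ) ∉ ({i + 1} : Finset ℤ) := by
    simp only [Finset.mem_singleton]; omega
  have hmem2 : (i - 1 : ℤ) ∉ insert i ({i + 1} : Finset ℤ) := by
    simp only [Finset.mem_insert, Finset.mem_singleton]; omega
  rw [tsum_eq_sum (s := insert (i-1) (insert i ({i+1} : Finset ℤ)))
    (fun j hj => hsupp t i j (one_lt_abs (by simpa using hj)))]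
  rw [Finset.sum_insert hmem2, Finset.sum_insert hmem1, Finset.sum_singleton]
  by_cases hp : Even ((t : ℤ) + i)
  · obtain ⟨h1, h2, h3⟩ := heven t i hp
    rw [h1, h2, h3, if_pos hp]; ring
  · obtain ⟨h1, h2, h3⟩ := hodd t i hp
    rw [h1, h2, h3, if_neg hp]; ring

lemma stepP_zero {μ : ℕ → ℤ → ℤ → ℝ}
    (hsupp : ∀ (t : ℕ) (i j : ℤ), 1 < |i - j| → μ t i j = 0)
    (t : ℕ) (x y : ℤ) (h : 1 < |x - y|) : stepP μ t x y = 0 := by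
  rw [stepP, hsupp t x y h, zero_div]

section stepfacts
variable {ε b b' : ℝ} {μ : ℕ → ℤ → ℤ → ℝ}
variable (hε0 : 0 < ε) (hε1 : ε < 1) (hb : 0 ≤ b) (hb' : 0 ≤ b')
variable (hsupp : ∀ (t : ℕ) (i j : ℤ), 1 < |i - j| → μ t i j = 0)
variable (heven : ∀ (t : ℕ) (i : ℤ), Even ((t : ℤ) + i) →
      μ t i (i - 1) = 1 - ε ∧ μ t i i = b ∧ μ t i (i + 1) = 1 + ε)
variable (hodd : ∀ (t : ℕ) (i : ℤ), ¬ Even ((t : ℤ) + i) →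
      μ t i (i - 1) = 1 + ε ∧ μ t i i = b' ∧ μ t i (i + 1) = 1 - ε)

include hsupp heven hodd

lemma stepP_even (t : ℕ) (x : ℤ) (hp : Even ((t : ℤ) + x)) :
    stepP μ t x (x - 1) = (1 - ε) / (b + 2) ∧ stepP μ t x x = b / (b + 2) ∧
      stepP μ t x (x + 1) = (1 + ε) / (b + 2) := by
  obtain ⟨h1, h2, h3⟩ := heven t x hp
  have hw := wdeg_eq hsupp heven hodd t x
  rw [if_pos hp] at hw
  exact ⟨by rw [stepP, h1, hw], by rw [stepP, h2, hw], by rw [stepP, h3, hw]⟩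

lemma stepP_odd (t : ℕ) (x : ℤ) (hp : ¬ Even ((t : ℤ) + x)) :
    stepP μ t x (x - 1) = (1 + ε) / (b' + 2) ∧ stepP μ t x x = b' / (b' + 2) ∧
      stepP μ t x (x + 1) = (1 - ε) / (b' + 2) := by
  obtain ⟨h1, h2, h3⟩ := hodd t x hp
  have hw := wdeg_eq hsupp heven hodd t x
  rw [if_neg hp] at hw
  exact ⟨by rw [stepP, h1, hw], by rw [stepP, h2, hw], by rw [stepP, h3, hw]⟩

include hε0 hε1 hb hb' in
lemma stepP_nonneg (t : ℕ) (x y : ℤ) : 0 ≤ stepP μ t x y := by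
  have hw := wdeg_eq hsupp heven hodd t x
  have hwpos : 0 < wdeg μ t x := by rw [hw]; split <;> linarith
  apply div_nonneg _ (le_of_lt hwpos)
  by_cases hj : y = x - 1 ∨ y = x ∨ y = x + 1
  · by_cases hp : Even ((t : ℤ) + x)
    · obtain ⟨h1, h2, h3⟩ := heven t x hp
      rcases hj with rfl | rfl | rfl <;> [rw [h1]; rw [h2]; rw [h3]] <;> linarith
    · obtain ⟨h1, h2, h3⟩ := hodd t x hp
      rcases hj with rfl | rfl | rfl <;> [rw [h1]; rw [h2]; rw [h3]] <;> linarith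
  · rw [hsupp t x y (one_lt_abs hj)]

end stepfacts

end RW1

namespace RW1

/-! ### Tilted transfer-operator bound -/

noncomputable def Hpar (θ d : ℝ) (n : ℕ) (x : ℤ) : ℝ :=
  if Even ((n:ℤ) + x) then Real.exp (d * θ) else 1

noncomputable def Gf (p : ℕ → ℤ → ℤ → ℝ) (θ d : ℝ) (n : ℕ) : ℝ :=
  ∑ x ∈ Finset.Icc (-(n:ℤ)) (n:ℤ), rf p n x * (Real.exp (θ * x) * Hpar θ d n x)

section G
variable {ε b b' θ d ρ : ℝ} {p : ℕ → ℤ → ℤ → ℝ}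
variable (hz : ∀ t x y, 1 < |x - y| → p t x y = 0)
variable (hpe : ∀ (t : ℕ) (x : ℤ), Even ((t:ℤ) + x) →
    p t x (x-1) = (1-ε)/(b+2) ∧ p t x x = b/(b+2) ∧ p t x (x+1) = (1+ε)/(b+2))
variable (hpo : ∀ (t : ℕ) (x : ℤ), ¬ Even ((t:ℤ) + x) →
    p t x (x-1) = (1+ε)/(b'+2) ∧ p t x x = b'/(b'+2) ∧ p t x (x+1) = (1-ε)/(b'+2))
variable (hb2 : 0 < b + 2) (hb'2 : 0 < b' + 2) (hρ : 0 < ρ)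
variable (hE : (1-ε)*Real.exp ((d-1)*θ) + b + (1+ε)*Real.exp ((d+1)*θ)
    ≤ (b+2)*(ρ*Real.exp (d*θ)))
variable (hO : (1+ε)*Real.exp (-θ) + b'*Real.exp (d*θ) + (1-ε)*Real.exp θ ≤ (b'+2)*ρ)

lemma Gf_zero : Gf p θ d 0 = Real.exp (d * θ) := by
  unfold Gf
  rw [show ((0:ℕ):ℤ) = 0 from rfl, neg_zero, Finset.Icc_self, Finset.sum_singleton,
    rf_zero_zero]
  simp [Hpar]

include hz hpe hpo hb2 hb'2 hρ hE hO in
lemma inner_le (n : ℕ) (x : ℤ) (hx : x ∈ Finset.Icc (-(n:ℤ)) (n:ℤ)) :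
    ∑ y ∈ Finset.Icc (-((n+1:ℕ):ℤ)) ((n+1:ℕ):ℤ),
      p n x y * (Real.exp (θ * y) * Hpar θ d (n+1) y)
    ≤ ρ * (Real.exp (θ * x) * Hpar θ d n x) := by
  rw [Finset.mem_Icc] at hx
  have hsub : Finset.Icc (x-1) (x+1) ⊆ Finset.Icc (-((n+1:ℕ):ℤ)) ((n+1:ℕ):ℤ) := by
    intro z hzz
    rw [Finset.mem_Icc] at hzz ⊢
    push_cast
    omega
  have hvan : ∀ y ∈ Finset.Icc (-((n+1:ℕ):ℤ)) ((n+1:ℕ):ℤ), y ∉ Finset.Icc (x-1) (x+1) →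
      p n x y * (Real.exp (θ * y) * Hpar θ d (n+1) y) = 0 := by
    intro y _ hy
    rw [Finset.mem_Icc] at hy
    have : 1 < |x - y| := by rw [lt_abs]; omega
    rw [hz n x y this, zero_mul]
  rw [← Finset.sum_subset hsub hvan]
  have hset : Finset.Icc (x-1) (x+1) = insert (x-1) (insert x ({x+1} : Finset ℤ)) := by
    ext z
    simp only [Finset.mem_Icc, Finset.mem_insert, Finset.mem_singleton]
    omega
  have hm1 : x ∉ ({x+1} : Finset ℤ) := by simp only [Finset.mem_singleton]; omega
  have hm2 : x - 1 ∉ insert x ({x+1} : Finset ℤ) := by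
    simp only [Finset.mem_insert, Finset.mem_singleton]; omega
  rw [hset, Finset.sum_insert hm2, Finset.sum_insert hm1, Finset.sum_singleton]
  have hc1 : ((x - 1 : ℤ) : ℝ) = (x:ℝ) - 1 := by push_cast; ring
  have hc2 : ((x + 1 : ℤ) : ℝ) = (x:ℝ) + 1 := by push_cast; ring
  have e1 : Real.exp (θ * ((x:ℝ) - 1)) = Real.exp (θ * x) * Real.exp (-θ) := by
    rw [← Real.exp_add]; ring_nf
  have e2 : Real.exp (θ * ((x:ℝ) + 1)) = Real.exp (θ * x) * Real.exp θ := by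
    rw [← Real.exp_add]; ring_nf
  have hd1 : (d-1)*θ = d*θ + (-θ) := by ring
  have hd2 : (d+1)*θ = d*θ + θ := by ring
  rw [hd1, hd2, Real.exp_add, Real.exp_add] at hE
  by_cases hpar : Even ((n:ℤ) + x)
  · have hA : Even (((n+1:ℕ):ℤ) + (x-1)) := by
      rw [Int.even_iff] at hpar ⊢; push_cast at hpar ⊢; omega
    have hB : ¬ Even (((n+1:ℕ):ℤ) + x) := by
      rw [Int.even_iff] at hpar ⊢; push_cast at hpar ⊢; omega
    have hC : Even (((n+1:ℕ):ℤ) + (x+1)) := by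
      rw [Int.even_iff] at hpar ⊢; push_cast at hpar ⊢; omega
    obtain ⟨q1, q2, q3⟩ := hpe n x hpar
    rw [q1, q2, q3]
    unfold Hpar
    rw [if_pos hA, if_neg hB, if_pos hC, if_pos hpar, hc1, hc2, e1, e2]
    have hax : (0:ℝ) ≤ Real.exp (θ * (x:ℝ)) / (b+2) := by positivity
    have hkey := mul_le_mul_of_nonneg_left hE hax
    calc (1-ε)/(b+2) * (Real.exp (θ*(x:ℝ)) * Real.exp (-θ) * Real.exp (d*θ))
          + ((b/(b+2)) * (Real.exp (θ*(x:ℝ)) * 1)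
          + (1+ε)/(b+2) * (Real.exp (θ*(x:ℝ)) * Real.exp θ * Real.exp (d*θ)))
        = Real.exp (θ*(x:ℝ))/(b+2) *
          ((1-ε)*(Real.exp (d*θ)*Real.exp (-θ)) + b + (1+ε)*(Real.exp (d*θ)*Real.exp θ)) := by
          ring
      _ ≤ Real.exp (θ*(x:ℝ))/(b+2) * ((b+2)*(ρ*Real.exp (d*θ))) := hkey
      _ = ρ * (Real.exp (θ*(x:ℝ)) * Real.exp (d*θ)) := by
          field_simp
  · have hA : ¬ Even (((n+1:ℕ):ℤ) + (x-1)) := by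
      rw [Int.even_iff] at hpar ⊢; push_cast at hpar ⊢; omega
    have hB : Even (((n+1:ℕ):ℤ) + x) := by
      rw [Int.even_iff] at hpar ⊢; push_cast at hpar ⊢; omega
    have hC : ¬ Even (((n+1:ℕ):ℤ) + (x+1)) := by
      rw [Int.even_iff] at hpar ⊢; push_cast at hpar ⊢; omega
    obtain ⟨q1, q2, q3⟩ := hpo n x hpar
    rw [q1, q2, q3]
    unfold Hpar
    rw [if_neg hA, if_pos hB, if_neg hC, if_neg hpar, hc1, hc2, e1, e2]
    have hax : (0:ℝ) ≤ Real.exp (θ * (x:ℝ)) / (b'+2) := by positivity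
    have hkey := mul_le_mul_of_nonneg_left hO hax
    calc (1+ε)/(b'+2) * (Real.exp (θ*(x:ℝ)) * Real.exp (-θ) * 1)
          + ((b'/(b'+2)) * (Real.exp (θ*(x:ℝ)) * Real.exp (d*θ))
          + (1-ε)/(b'+2) * (Real.exp (θ*(x:ℝ)) * Real.exp θ * 1))
        = Real.exp (θ*(x:ℝ))/(b'+2) *
          ((1+ε)*Real.exp (-θ) + b'*Real.exp (d*θ) + (1-ε)*Real.exp θ) := by
          ring
      _ ≤ Real.exp (θ*(x:ℝ))/(b'+2) * ((b'+2)*ρ) := hkey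
      _ = ρ * (Real.exp (θ*(x:ℝ)) * 1) := by
          field_simp

include hz hpe hpo hb2 hb'2 hρ hE hO in
lemma Gf_succ_le (hnn : ∀ t x y, 0 ≤ p t x y) (hfin : ∀ n x, Uf p n x ≠ ⊤) (n : ℕ) :
    Gf p θ d (n+1) ≤ ρ * Gf p θ d n := by
  unfold Gf
  have step1 : ∀ y ∈ Finset.Icc (-((n+1:ℕ):ℤ)) ((n+1:ℕ):ℤ),
      rf p (n+1) y * (Real.exp (θ * y) * Hpar θ d (n+1) y)
      = ∑ x ∈ Finset.Icc (-(n:ℤ)) (n:ℤ),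
          rf p n x * (p n x y * (Real.exp (θ * y) * Hpar θ d (n+1) y)) := by
    intro y _
    rw [rf_succ p hz hnn hfin n y, Finset.sum_mul]
    apply Finset.sum_congr rfl
    intro x _
    ring
  rw [Finset.sum_congr rfl step1, Finset.sum_comm]
  have step2 : ∀ x ∈ Finset.Icc (-(n:ℤ)) (n:ℤ),
      (∑ y ∈ Finset.Icc (-((n+1:ℕ):ℤ)) ((n+1:ℕ):ℤ),
        rf p n x * (p n x y * (Real.exp (θ * y) * Hpar θ d (n+1) y)))
      ≤ rf p n x * (ρ * (Real.exp (θ * x) * Hpar θ d n x)) := by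
    intro x hx
    rw [← Finset.mul_sum]
    exact mul_le_mul_of_nonneg_left
      (inner_le hz hpe hpo hb2 hb'2 hρ hE hO n x hx) (rf_nonneg p n x)
  calc _ ≤ ∑ x ∈ Finset.Icc (-(n:ℤ)) (n:ℤ),
        rf p n x * (ρ * (Real.exp (θ * x) * Hpar θ d n x)) := Finset.sum_le_sum step2
    _ = ρ * ∑ x ∈ Finset.Icc (-(n:ℤ)) (n:ℤ),
        rf p n x * (Real.exp (θ * x) * Hpar θ d n x) := by
        rw [Finset.mul_sum]
        apply Finset.sum_congr rfl
        intro x _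
        ring

include hz hpe hpo hb2 hb'2 hρ hE hO in
lemma Gf_le (hnn : ∀ t x y, 0 ≤ p t x y) (hfin : ∀ n x, Uf p n x ≠ ⊤) (n : ℕ) :
    Gf p θ d n ≤ Real.exp (d * θ) * ρ ^ n := by
  induction n with
  | zero => rw [Gf_zero]; simp
  | succ n ih =>
    calc Gf p θ d (n+1) ≤ ρ * Gf p θ d n :=
        Gf_succ_le hz hpe hpo hb2 hb'2 hρ hE hO hnn hfin n
      _ ≤ ρ * (Real.exp (d*θ) * ρ ^ n) := mul_le_mul_of_nonneg_left ih (le_of_lt hρ)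
      _ = Real.exp (d*θ) * ρ ^ (n+1) := by ring

include hz hpe hpo hb2 hb'2 hρ hE hO in
lemma sum_exp_le (hnn : ∀ t x y, 0 ≤ p t x y) (hfin : ∀ n x, Uf p n x ≠ ⊤) (n : ℕ) :
    ∑ x ∈ Finset.Icc (-(n:ℤ)) (n:ℤ), rf p n x * Real.exp (θ * x)
    ≤ (Real.exp (d*θ) / min (Real.exp (d*θ)) 1) * ρ ^ n := by
  have hm : 0 < min (Real.exp (d*θ)) 1 := lt_min (Real.exp_pos _) one_pos
  rw [div_mul_eq_mul_div, le_div_iff₀ hm, Finset.sum_mul]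
  calc ∑ x ∈ Finset.Icc (-(n:ℤ)) (n:ℤ), rf p n x * Real.exp (θ * x) * min (Real.exp (d*θ)) 1
      ≤ ∑ x ∈ Finset.Icc (-(n:ℤ)) (n:ℤ), rf p n x * (Real.exp (θ * x) * Hpar θ d n x) := by
        apply Finset.sum_le_sum
        intro x _
        have h1 : min (Real.exp (d*θ)) 1 ≤ Hpar θ d n x := by
          unfold Hpar
          split
          · exact min_le_left _ _
          · exact min_le_right _ _
        have h2 : 0 ≤ rf p n x * Real.exp (θ * x) :=
          mul_nonneg (rf_nonneg p n x) (le_of_lt (Real.exp_pos _))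
        calc rf p n x * Real.exp (θ * x) * min (Real.exp (d*θ)) 1
            ≤ rf p n x * Real.exp (θ * x) * Hpar θ d n x := mul_le_mul_of_nonneg_left h1 h2
          _ = rf p n x * (Real.exp (θ * x) * Hpar θ d n x) := by ring
    _ = Gf p θ d n := rfl
    _ ≤ Real.exp (d*θ) * ρ ^ n := Gf_le hz hpe hpo hb2 hb'2 hρ hE hO hnn hfin n

end G

end RW1

namespace RW1

/-! ### Existence of tilt parameters -/

lemma hd_exp (A k : ℝ) : HasDerivAt (fun θ : ℝ => A * Real.exp (k*θ)) (A*k) 0 := by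
  have h1 : HasDerivAt (fun θ : ℝ => k * θ) k 0 := by
    simpa using (hasDerivAt_id (0:ℝ)).const_mul k
  have h2 := (Real.hasDerivAt_exp (k*(0:ℝ))).comp 0 h1
  have h3 := h2.const_mul A
  rw [show A*k = A*(Real.exp (k*0) * k) by simp]
  exact h3

lemma pos_of_deriv_pos {f g : ℝ → ℝ} {a a' : ℝ} (hf0 : f 0 = 0) (hg0 : g 0 = 0)
    (hf : HasDerivAt f a 0) (hg : HasDerivAt g a' 0) (ha : 0 < a) (ha' : 0 < a') :
    ∃ θ : ℝ, 0 < θ ∧ 0 ≤ f θ ∧ 0 ≤ g θ := by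
  have hf' := hasDerivAt_iff_tendsto_slope.1 hf
  have hg' := hasDerivAt_iff_tendsto_slope.1 hg
  have hsub : (nhdsWithin (0:ℝ) (Set.Ioi 0)) ≤ nhdsWithin (0:ℝ) {(0:ℝ)}ᶜ :=
    nhdsWithin_mono 0 (fun x hx => ne_of_gt hx)
  have h1 : ∀ᶠ θ in nhdsWithin (0:ℝ) (Set.Ioi 0), 0 < slope f 0 θ :=
    (hf'.mono_left hsub).eventually (eventually_gt_nhds ha)
  have h2 : ∀ᶠ θ in nhdsWithin (0:ℝ) (Set.Ioi 0), 0 < slope g 0 θ :=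
    (hg'.mono_left hsub).eventually (eventually_gt_nhds ha')
  have h3 : ∀ᶠ θ in nhdsWithin (0:ℝ) (Set.Ioi 0), 0 < θ :=
    eventually_mem_nhdsWithin.mono (fun x hx => hx)
  obtain ⟨θ, hs1, hs2, hs3⟩ := (h1.and (h2.and h3)).exists
  refine ⟨θ, hs3, ?_, ?_⟩
  · have := mul_nonneg (le_of_lt hs1) (le_of_lt hs3)
    rwa [slope_def_field, hf0, sub_zero, sub_zero, div_mul_cancel₀ _ (ne_of_gt hs3)] at this
  · have := mul_nonneg (le_of_lt hs2) (le_of_lt hs3)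
    rwa [slope_def_field, hg0, sub_zero, sub_zero, div_mul_cancel₀ _ (ne_of_gt hs3)] at this

/-- Existence of a positive tilt parameter. -/
lemma exists_theta_pos (c d δ' ε b b' : ℝ) (hδ' : 0 < δ') (hb2 : 0 < b + 2)
    (hb'2 : 0 < b' + 2)
    (idE : (b+2)*(c+d) = 2*d + 2*ε) (idO : (b'+2)*c + 2*ε = b'*d) :
    ∃ θ : ℝ, 0 < θ ∧
      (1-ε)*Real.exp ((d-1)*θ) + b + (1+ε)*Real.exp ((d+1)*θ)
        ≤ (b+2)*Real.exp ((c+δ'+d)*θ) ∧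
      (1+ε)*Real.exp (-θ) + b'*Real.exp (d*θ) + (1-ε)*Real.exp θ
        ≤ (b'+2)*Real.exp ((c+δ')*θ) := by
  set fE : ℝ → ℝ := fun θ => (b+2)*Real.exp ((c+δ'+d)*θ)
    - ((1-ε)*Real.exp ((d-1)*θ) + b + (1+ε)*Real.exp ((d+1)*θ)) with hfE
  set fO : ℝ → ℝ := fun θ => (b'+2)*Real.exp ((c+δ')*θ)
    - ((1+ε)*Real.exp ((-1)*θ) + b'*Real.exp (d*θ) + (1-ε)*Real.exp (1*θ)) with hfO
  have hfE0 : fE 0 = 0 := by simp [hfE]; ring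
  have hfO0 : fO 0 = 0 := by simp [hfO]; ring
  have hdE : HasDerivAt fE ((b+2)*(c+δ'+d) - ((1-ε)*(d-1) + 0 + (1+ε)*(d+1))) 0 := by
    apply HasDerivAt.sub (hd_exp (b+2) (c+δ'+d))
    exact ((hd_exp (1-ε) (d-1)).add (hasDerivAt_const 0 b)).add (hd_exp (1+ε) (d+1))
  have hdO : HasDerivAt fO ((b'+2)*(c+δ') - (((1+ε)*(-1) + b'*d) + (1-ε)*1)) 0 := by
    apply HasDerivAt.sub (hd_exp (b'+2) (c+δ'))
    exact ((hd_exp (1+ε) (-1)).add (hd_exp b' d)).add (hd_exp (1-ε) 1)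
  have hEpos : 0 < (b+2)*(c+δ'+d) - ((1-ε)*(d-1) + 0 + (1+ε)*(d+1)) := by
    have : (b+2)*(c+δ'+d) - ((1-ε)*(d-1) + 0 + (1+ε)*(d+1)) = (b+2)*δ' := by
      linear_combination idE
    rw [this]
    exact mul_pos hb2 hδ'
  have hOpos : 0 < (b'+2)*(c+δ') - (((1+ε)*(-1) + b'*d) + (1-ε)*1) := by
    have : (b'+2)*(c+δ') - (((1+ε)*(-1) + b'*d) + (1-ε)*1) = (b'+2)*δ' := by
      linear_combination idO
    rw [this]
    exact mul_pos hb'2 hδ'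
  obtain ⟨θ, hθ, hE, hO⟩ := pos_of_deriv_pos hfE0 hfO0 hdE hdO hEpos hOpos
  refine ⟨θ, hθ, by simpa [hfE] using sub_nonneg.1 hE, ?_⟩
  have := sub_nonneg.1 hO
  simpa [hfO, neg_one_mul, one_mul] using this

/-- Existence of a negative tilt parameter. -/
lemma exists_theta_neg (c d δ' ε b b' : ℝ) (hδ' : 0 < δ') (hb2 : 0 < b + 2)
    (hb'2 : 0 < b' + 2)
    (idE : (b+2)*(c+d) = 2*d + 2*ε) (idO : (b'+2)*c + 2*ε = b'*d) :
    ∃ θ : ℝ, θ < 0 ∧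
      (1-ε)*Real.exp ((d-1)*θ) + b + (1+ε)*Real.exp ((d+1)*θ)
        ≤ (b+2)*Real.exp ((c-δ'+d)*θ) ∧
      (1+ε)*Real.exp (-θ) + b'*Real.exp (d*θ) + (1-ε)*Real.exp θ
        ≤ (b'+2)*Real.exp ((c-δ')*θ) := by
  set fE : ℝ → ℝ := fun s => (b+2)*Real.exp ((c-δ'+d)*(-s))
    - ((1-ε)*Real.exp ((d-1)*(-s)) + b + (1+ε)*Real.exp ((d+1)*(-s))) with hfE
  set fO : ℝ → ℝ := fun s => (b'+2)*Real.exp ((c-δ')*(-s))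
    - ((1+ε)*Real.exp ((-1)*(-s)) + b'*Real.exp (d*(-s)) + (1-ε)*Real.exp (1*(-s))) with hfO
  have key : ∀ (A k : ℝ), HasDerivAt (fun s : ℝ => A * Real.exp (k*(-s))) (A*(-k)) 0 := by
    intro A k
    have := hd_exp A (-k)
    simpa [neg_mul, mul_neg, neg_neg] using this
  have hfE0 : fE 0 = 0 := by simp [hfE]; ring
  have hfO0 : fO 0 = 0 := by simp [hfO]; ring
  have hdE : HasDerivAt fE ((b+2)*(-(c-δ'+d)) - ((1-ε)*(-(d-1)) + 0 + (1+ε)*(-(d+1)))) 0 := by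
    apply HasDerivAt.sub (key (b+2) (c-δ'+d))
    exact ((key (1-ε) (d-1)).add (hasDerivAt_const 0 b)).add (key (1+ε) (d+1))
  have hdO : HasDerivAt fO ((b'+2)*(-(c-δ')) - (((1+ε)*(-(-1)) + b'*(-d)) + (1-ε)*(-1))) 0 := by
    apply HasDerivAt.sub (key (b'+2) (c-δ'))
    exact ((key (1+ε) (-1)).add (key b' d)).add (key (1-ε) 1)
  have hEpos : 0 < (b+2)*(-(c-δ'+d)) - ((1-ε)*(-(d-1)) + 0 + (1+ε)*(-(d+1))) := by
    have : (b+2)*(-(c-δ'+d)) - ((1-ε)*(-(d-1)) + 0 + (1+ε)*(-(d+1))) = (b+2)*δ' := by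
      linear_combination -idE
    rw [this]; exact mul_pos hb2 hδ'
  have hOpos : 0 < (b'+2)*(-(c-δ')) - (((1+ε)*(-(-1)) + b'*(-d)) + (1-ε)*(-1)) := by
    have : (b'+2)*(-(c-δ')) - (((1+ε)*(-(-1)) + b'*(-d)) + (1-ε)*(-1)) = (b'+2)*δ' := by
      linear_combination -idO
    rw [this]; exact mul_pos hb'2 hδ'
  obtain ⟨s, hs, hE, hO⟩ := pos_of_deriv_pos hfE0 hfO0 hdE hdO hEpos hOpos
  refine ⟨-s, neg_lt_zero.2 hs, ?_, ?_⟩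
  · simpa [hfE] using sub_nonneg.1 hE
  · have := sub_nonneg.1 hO
    simpa [hfO, neg_one_mul, one_mul] using this

/-! ### Tail bound and geometric summability -/

lemma tail_bound {Ω : Type*} [MeasurableSpace Ω] {P : Measure Ω} {X : ℕ → Ω → ℤ}
    {p : ℕ → ℤ → ℤ → ℝ}
    (hz : ∀ t x y, 1 < |x - y| → p t x y = 0)
    (hfin : ∀ n x, Uf p n x ≠ ⊤)
    (hP : ∀ n x, P {ω | X n ω = x} = Uf p n x)
    (t : ℕ) (S : Set ℤ) (θ a B : ℝ)
    (h1 : ∀ x : ℤ, x ∈ S → 1 ≤ Real.exp (θ * ((x:ℝ) - a)))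
    (hB : ∑ x ∈ Finset.Icc (-(t:ℤ)) (t:ℤ), rf p t x * Real.exp (θ * x) ≤ B) :
    P {ω | X t ω ∈ S} ≤ ENNReal.ofReal (Real.exp (-(θ*a)) * B) := by
  set F : ℤ → ℝ := fun x => Real.exp (-(θ*a)) * (rf p t x * Real.exp (θ * x)) with hF
  have hFnn : ∀ x, 0 ≤ F x := fun x => by
    apply mul_nonneg (le_of_lt (Real.exp_pos _))
    exact mul_nonneg (rf_nonneg p t x) (le_of_lt (Real.exp_pos _))
  have hdec : {ω | X t ω ∈ S} = ⋃ x : S, {ω | X t ω = (x:ℤ)} := by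
    ext ω; simp
  have step1 : P {ω | X t ω ∈ S} ≤ ∑' x : S, P {ω | X t ω = (x:ℤ)} := by
    rw [hdec]; exact measure_iUnion_le _
  have step2 : ∀ x : S, P {ω | X t ω = (x:ℤ)} ≤ ENNReal.ofReal (F (x:ℤ)) := by
    intro x
    rw [hP t (x:ℤ), ← ENNReal.ofReal_toReal (hfin t (x:ℤ))]
    apply ENNReal.ofReal_le_ofReal
    have hexp : Real.exp (θ * (((x:ℤ):ℝ) - a))
        = Real.exp (θ * ((x:ℤ):ℝ)) * Real.exp (-(θ*a)) := by
      rw [← Real.exp_add]; ring_nf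
    calc (Uf p t (x:ℤ)).toReal = rf p t (x:ℤ) := rfl
      _ ≤ rf p t (x:ℤ) * Real.exp (θ * (((x:ℤ):ℝ) - a)) :=
          le_mul_of_one_le_right (rf_nonneg p t (x:ℤ)) (h1 (x:ℤ) x.2)
      _ = F (x:ℤ) := by rw [hexp, hF]; ring
  have step3 : (∑' x : S, ENNReal.ofReal (F (x:ℤ))) ≤ ∑' x : ℤ, ENNReal.ofReal (F x) := by
    rw [tsum_subtype S (fun x => ENNReal.ofReal (F x))]
    exact ENNReal.tsum_le_tsum (fun x => Set.indicator_le_self S _ x)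
  have step4 : (∑' x : ℤ, ENNReal.ofReal (F x))
      = ∑ x ∈ Finset.Icc (-(t:ℤ)) (t:ℤ), ENNReal.ofReal (F x) := by
    apply tsum_eq_sum
    intro x hx
    rw [Finset.mem_Icc] at hx
    have : (t:ℤ) < |x| := by rw [lt_abs]; omega
    rw [hF]
    simp [rf_zero p hz t x this]
  calc P {ω | X t ω ∈ S} ≤ ∑' x : S, P {ω | X t ω = (x:ℤ)} := step1
    _ ≤ ∑' x : S, ENNReal.ofReal (F (x:ℤ)) := ENNReal.tsum_le_tsum step2
    _ ≤ ∑' x : ℤ, ENNReal.ofReal (F x) := step3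
    _ = ∑ x ∈ Finset.Icc (-(t:ℤ)) (t:ℤ), ENNReal.ofReal (F x) := step4
    _ = ENNReal.ofReal (∑ x ∈ Finset.Icc (-(t:ℤ)) (t:ℤ), F x) :=
        (ENNReal.ofReal_sum_of_nonneg (fun x _ => hFnn x)).symm
    _ ≤ ENNReal.ofReal (Real.exp (-(θ*a)) * B) := by
        apply ENNReal.ofReal_le_ofReal
        rw [hF, ← Finset.mul_sum]
        exact mul_le_mul_of_nonneg_left hB (le_of_lt (Real.exp_pos _))

lemma geom_ne_top (K q : ℝ) (hK : 0 ≤ K) (hq0 : 0 ≤ q) (hq1 : q < 1) :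
    (∑' t : ℕ, ENNReal.ofReal (K * q^t)) ≠ ⊤ := by
  have h : ∀ t : ℕ, ENNReal.ofReal (K*q^t) = ENNReal.ofReal K * (ENNReal.ofReal q)^t :=
    fun t => by rw [ENNReal.ofReal_mul hK, ENNReal.ofReal_pow hq0]
  rw [tsum_congr h, ENNReal.tsum_mul_left]
  apply ENNReal.mul_ne_top ENNReal.ofReal_ne_top
  rw [ENNReal.tsum_geometric]
  apply ENNReal.inv_ne_top.2
  rw [Ne, tsub_eq_zero_iff_le]
  exact not_le.2 (ENNReal.ofReal_lt_one.2 hq1)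

end RW1

set_option maxHeartbeats 1000000 in
open RW1 in
/-- For the conductances on `ℤ` given by
`μ^{(t)}(i,i-1) = 1-ε`, `μ^{(t)}(i,i) = b`, `μ^{(t)}(i,i+1) = 1+ε` when `t+i` is even, and
`μ^{(t)}(i,i-1) = 1+ε`, `μ^{(t)}(i,i) = b'`, `μ^{(t)}(i,i+1) = 1-ε` when `t+i` is odd
(with `0 ≤ b < b'`, `ε ∈ (0,1)`, and writing `γ = b/(b+2)`, `γ' = b'/(b'+2)`),
the discrete-time random walk started at `0` satisfies, almost surely,
`X_t/t → ε(γ'-γ)/(γ'+γ) > 0`. -/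
theorem stmt1 (ε b b' : ℝ) (hε0 : 0 < ε) (hε1 : ε < 1) (hb : 0 ≤ b) (hbb' : b < b')
    (μ : ℕ → ℤ → ℤ → ℝ)
    (hsupp : ∀ (t : ℕ) (i j : ℤ), 1 < |i - j| → μ t i j = 0)
    (heven : ∀ (t : ℕ) (i : ℤ), Even ((t : ℤ) + i) →
      μ t i (i - 1) = 1 - ε ∧ μ t i i = b ∧ μ t i (i + 1) = 1 + ε)
    (hodd : ∀ (t : ℕ) (i : ℤ), ¬ Even ((t : ℤ) + i) →
      μ t i (i - 1) = 1 + ε ∧ μ t i i = b' ∧ μ t i (i + 1) = 1 - ε)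
    {Ω : Type*} [MeasurableSpace Ω] (P : Measure Ω) [IsProbabilityMeasure P]
    (X : ℕ → Ω → ℤ) (hX : IsWalkLaw μ P X 0) :
    0 < ε * (b' / (b' + 2) - b / (b + 2)) / (b' / (b' + 2) + b / (b + 2)) ∧
    ∀ᵐ ω ∂P, Tendsto (fun t : ℕ => (X t ω : ℝ) / t) atTop
      (nhds (ε * (b' / (b' + 2) - b / (b + 2)) / (b' / (b' + 2) + b / (b + 2)))) := by
  classical
  have hb'pos : 0 < b' := lt_of_le_of_lt hb hbb'
  have hb' : 0 ≤ b' := le_of_lt hb'pos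
  have hb2 : (0:ℝ) < b + 2 := by linarith
  have hb'2 : (0:ℝ) < b' + 2 := by linarith
  set c₀ := ε * (b' / (b' + 2) - b / (b + 2)) / (b' / (b' + 2) + b / (b + 2)) with hc₀def
  have hD : (0:ℝ) < b*b' + b + b' := by nlinarith
  have hden : (0:ℝ) < b'/(b'+2) + b/(b+2) := by
    have h1 : 0 < b'/(b'+2) := div_pos hb'pos hb'2
    have h2 : 0 ≤ b/(b+2) := div_nonneg hb (le_of_lt hb2)
    linarith
  have hc : c₀ = ε * (b' - b) / (b*b' + b + b') := by
    rw [hc₀def]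
    rw [div_eq_div_iff (ne_of_gt hden) (ne_of_gt hD)]
    field_simp
    ring
  have hc0 : 0 < c₀ := by
    rw [hc]; exact div_pos (mul_pos hε0 (by linarith)) hD
  set d := ε * (b + b' + 4) / (b*b' + b + b') with hddef
  have idE : (b+2)*(c₀+d) = 2*d + 2*ε := by
    rw [hc, hddef]
    field_simp
    ring
  have idO : (b'+2)*c₀ + 2*ε = b'*d := by
    rw [hc, hddef]
    field_simp
    ring
  -- transition probability facts
  have hz : ∀ (t : ℕ) (x y : ℤ), 1 < |x - y| → stepP μ t x y = 0 := stepP_zero hsupp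
  have hnn : ∀ (t : ℕ) (x y : ℤ), 0 ≤ stepP μ t x y :=
    stepP_nonneg hε0 hε1 hb hb' hsupp heven hodd
  have hpe : ∀ (t : ℕ) (x : ℤ), Even ((t:ℤ) + x) →
      stepP μ t x (x-1) = (1-ε)/(b+2) ∧ stepP μ t x x = b/(b+2) ∧
        stepP μ t x (x+1) = (1+ε)/(b+2) := fun t x hp => stepP_even hsupp heven hodd t x hp
  have hpo : ∀ (t : ℕ) (x : ℤ), ¬ Even ((t:ℤ) + x) →
      stepP μ t x (x-1) = (1+ε)/(b'+2) ∧ stepP μ t x x = b'/(b'+2) ∧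
        stepP μ t x (x+1) = (1-ε)/(b'+2) := fun t x hp => stepP_odd hsupp heven hodd t x hp
  have hfin : ∀ (n : ℕ) (x : ℤ), Uf (stepP μ) n x ≠ ⊤ := Uf_bdd hX hnn
  have hP : ∀ (n : ℕ) (x : ℤ), P {ω | X n ω = x} = Uf (stepP μ) n x := measure_eq_Uf hX hnn
  refine ⟨hc0, ?_⟩
  -- main estimate: for every δ > 0, eventually |X_t - c₀ t| < δ t a.s.
  have main : ∀ δ : ℝ, 0 < δ →
      ∀ᵐ ω ∂P, ∀ᶠ t : ℕ in atTop, |(X t ω : ℝ) - c₀ * t| < δ * t := by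
    intro δ hδ
    have hδ2 : 0 < δ/2 := by linarith
    obtain ⟨θ₁, hθ₁, hE1, hO1⟩ := exists_theta_pos c₀ d (δ/2) ε b b' hδ2 hb2 hb'2 idE idO
    obtain ⟨θ₂, hθ₂, hE2, hO2⟩ := exists_theta_neg c₀ d (δ/2) ε b b' hδ2 hb2 hb'2 idE idO
    have hE1' : (1-ε)*Real.exp ((d-1)*θ₁) + b + (1+ε)*Real.exp ((d+1)*θ₁)
        ≤ (b+2)*(Real.exp ((c₀+δ/2)*θ₁) * Real.exp (d*θ₁)) := by
      rwa [← Real.exp_add, show (c₀+δ/2)*θ₁ + d*θ₁ = (c₀+δ/2+d)*θ₁ by ring]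
    have hE2' : (1-ε)*Real.exp ((d-1)*θ₂) + b + (1+ε)*Real.exp ((d+1)*θ₂)
        ≤ (b+2)*(Real.exp ((c₀-δ/2)*θ₂) * Real.exp (d*θ₂)) := by
      rwa [← Real.exp_add, show (c₀-δ/2)*θ₂ + d*θ₂ = (c₀-δ/2+d)*θ₂ by ring]
    have hρ₁ : (0:ℝ) < Real.exp ((c₀+δ/2)*θ₁) := Real.exp_pos _
    have hρ₂ : (0:ℝ) < Real.exp ((c₀-δ/2)*θ₂) := Real.exp_pos _
    set K₁ := Real.exp (d*θ₁) / min (Real.exp (d*θ₁)) 1 with hK₁def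
    set K₂ := Real.exp (d*θ₂) / min (Real.exp (d*θ₂)) 1 with hK₂def
    have hK₁ : 0 < K₁ := div_pos (Real.exp_pos _) (lt_min (Real.exp_pos _) one_pos)
    have hK₂ : 0 < K₂ := div_pos (Real.exp_pos _) (lt_min (Real.exp_pos _) one_pos)
    have hsum1 : ∀ t : ℕ, ∑ x ∈ Finset.Icc (-(t:ℤ)) (t:ℤ),
        rf (stepP μ) t x * Real.exp (θ₁ * x) ≤ K₁ * (Real.exp ((c₀+δ/2)*θ₁))^t :=
      fun t => sum_exp_le hz hpe hpo hb2 hb'2 hρ₁ hE1' hO1 hnn hfin t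
    have hsum2 : ∀ t : ℕ, ∑ x ∈ Finset.Icc (-(t:ℤ)) (t:ℤ),
        rf (stepP μ) t x * Real.exp (θ₂ * x) ≤ K₂ * (Real.exp ((c₀-δ/2)*θ₂))^t :=
      fun t => sum_exp_le hz hpe hpo hb2 hb'2 hρ₂ hE2' hO2 hnn hfin t
    set q₁ := Real.exp (-(θ₁*(δ/2))) with hq₁def
    set q₂ := Real.exp (θ₂*(δ/2)) with hq₂def
    have hq₁0 : 0 ≤ q₁ := (Real.exp_pos _).le
    have hq₂0 : 0 ≤ q₂ := (Real.exp_pos _).le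
    have hq₁1 : q₁ < 1 := Real.exp_lt_one_iff.mpr (by nlinarith)
    have hq₂1 : q₂ < 1 := Real.exp_lt_one_iff.mpr (mul_neg_of_neg_of_pos hθ₂ hδ2)
    have tail1 : ∀ t : ℕ, P {ω | X t ω ∈ {x : ℤ | (c₀+δ)*t ≤ (x:ℝ)}}
        ≤ ENNReal.ofReal (K₁ * q₁^t) := by
      intro t
      have h1 : ∀ x : ℤ, x ∈ {x : ℤ | (c₀+δ)*t ≤ (x:ℝ)} →
          1 ≤ Real.exp (θ₁*((x:ℝ) - (c₀+δ)*t)) := fun x hx =>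
        Real.one_le_exp (mul_nonneg (le_of_lt hθ₁) (sub_nonneg.2 hx))
      have ht := tail_bound hz hfin hP t _ θ₁ ((c₀+δ)*t)
        (K₁ * (Real.exp ((c₀+δ/2)*θ₁))^t) h1 (hsum1 t)
      refine le_trans ht (le_of_eq ?_)
      congr 1
      rw [hq₁def, ← Real.exp_nat_mul, ← Real.exp_nat_mul, mul_left_comm, ← Real.exp_add]
      congr 2
      push_cast
      ring
    have tail2 : ∀ t : ℕ, P {ω | X t ω ∈ {x : ℤ | (x:ℝ) ≤ (c₀-δ)*t}}
        ≤ ENNReal.ofReal (K₂ * q₂^t) := by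
      intro t
      have h1 : ∀ x : ℤ, x ∈ {x : ℤ | (x:ℝ) ≤ (c₀-δ)*t} →
          1 ≤ Real.exp (θ₂*((x:ℝ) - (c₀-δ)*t)) := by
        intro x hx
        have h0 : 0 ≤ θ₂*((x:ℝ) - (c₀-δ)*t) := by
          have := mul_nonneg (neg_nonneg.2 (le_of_lt hθ₂))
            (neg_nonneg.2 (sub_nonpos.2 hx))
          rwa [neg_mul_neg] at this
        exact Real.one_le_exp h0
      have ht := tail_bound hz hfin hP t _ θ₂ ((c₀-δ)*t)
        (K₂ * (Real.exp ((c₀-δ/2)*θ₂))^t) h1 (hsum2 t)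
      refine le_trans ht (le_of_eq ?_)
      congr 1
      rw [hq₂def, ← Real.exp_nat_mul, ← Real.exp_nat_mul, mul_left_comm, ← Real.exp_add]
      congr 2
      push_cast
      ring
    set s : ℕ → Set Ω := fun t => {ω | δ*t ≤ |(X t ω : ℝ) - c₀*t|} with hsdef
    have hsub : ∀ t : ℕ, s t ⊆ {ω | X t ω ∈ {x : ℤ | (c₀+δ)*t ≤ (x:ℝ)}}
        ∪ {ω | X t ω ∈ {x : ℤ | (x:ℝ) ≤ (c₀-δ)*t}} := by
      intro t ω hω
      have hω' : δ*(t:ℝ) ≤ |(X t ω : ℝ) - c₀*t| := hω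
      rcases le_abs.1 hω' with h | h
      · left
        show (c₀+δ)*(t:ℝ) ≤ ((X t ω : ℤ):ℝ)
        linarith
      · right
        show ((X t ω : ℤ):ℝ) ≤ (c₀-δ)*(t:ℝ)
        linarith
    have hsum_ne : (∑' t : ℕ, P (s t)) ≠ ⊤ := by
      have hle : ∀ t : ℕ, P (s t)
          ≤ ENNReal.ofReal (K₁*q₁^t) + ENNReal.ofReal (K₂*q₂^t) := by
        intro t
        calc P (s t) ≤ P ({ω | X t ω ∈ {x : ℤ | (c₀+δ)*t ≤ (x:ℝ)}}
              ∪ {ω | X t ω ∈ {x : ℤ | (x:ℝ) ≤ (c₀-δ)*t}}) := measure_mono (hsub t)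
          _ ≤ P {ω | X t ω ∈ {x : ℤ | (c₀+δ)*t ≤ (x:ℝ)}}
              + P {ω | X t ω ∈ {x : ℤ | (x:ℝ) ≤ (c₀-δ)*t}} := measure_union_le _ _
          _ ≤ _ := add_le_add (tail1 t) (tail2 t)
      apply ne_top_of_le_ne_top _ (ENNReal.tsum_le_tsum hle)
      rw [ENNReal.tsum_add]
      exact ENNReal.add_ne_top.2
        ⟨geom_ne_top K₁ q₁ (le_of_lt hK₁) hq₁0 hq₁1,
         geom_ne_top K₂ q₂ (le_of_lt hK₂) hq₂0 hq₂1⟩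
    filter_upwards [MeasureTheory.ae_eventually_notMem hsum_ne] with ω hω
    exact hω.mono fun t ht => not_le.1 ht
  have hall : ∀ᵐ ω ∂P, ∀ m : ℕ, ∀ᶠ t : ℕ in atTop,
      |(X t ω : ℝ) - c₀*t| < (1/((m:ℝ)+1))*t :=
    MeasureTheory.ae_all_iff.2 fun m => main _ (by positivity)
  filter_upwards [hall] with ω hω
  rw [Metric.tendsto_atTop]
  intro e he
  obtain ⟨m, hm⟩ := exists_nat_one_div_lt he
  obtain ⟨N, hN⟩ := eventually_atTop.1 (hω m)
  refine ⟨max N 1, fun t ht => ?_⟩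
  have htN : N ≤ t := le_trans (le_max_left N 1) ht
  have ht1 : 1 ≤ t := le_trans (le_max_right N 1) ht
  have htpos : (0:ℝ) < t := by
    have : 0 < t := ht1
    exact_mod_cast this
  have hbnd := hN t htN
  rw [Real.dist_eq]
  have heq : (X t ω : ℝ)/t - c₀ = ((X t ω : ℝ) - c₀*t)/t := by
    field_simp
  rw [heq, abs_div, abs_of_pos htpos, div_lt_iff₀ htpos]
  calc |(X t ω : ℝ) - c₀*t| < (1/((m:ℝ)+1))*t := hbnd
    _ < e * t := by exact mul_lt_mul_of_pos_right hm htpos
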